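/- Let B_n(x) ∈ ℚ[x] denote the n-th Bernoulli polynomial and let B(x,t) := Σ_{n≥0} B_n(x) tⁿ ∈ (ℚ[x])[[t]] be the ordinary generating function of the Bernoulli polynomials. Then, in (ℚ[x])[[t]], B(x, t/(1+t)) = (1+t)·B(x,t) − t(1+t)·(1+t−tx)^{−2}, where 1+t−tx is a unit of (ℚ[x])[[t]] (its constant term in t is 1). -/

import Mathlib

noncomputable section

/-- Substitution of a power series `u` (assumed to have zero constant term)
into a power series `p`, i.e. `p(u)`, defined coefficientwise. -/
def PowerSeries.substPS {R : Type*} [CommRing R] (u p : PowerSeries R) : PowerSeries R :=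
  PowerSeries.mk fun k =>
    ∑ n ∈ Finset.range (k + 1), PowerSeries.coeff n p * PowerSeries.coeff k (u ^ n)

open PowerSeries

private lemma neg_one_pow_sub_q (M i : ℕ) (h : i ≤ M) :
    (-1 : ℚ) ^ (M - i) = (-1) ^ M * (-1) ^ i := by
  have h1 : (-1 : ℚ) ^ (M - i) * (-1) ^ i = (-1) ^ M := by
    rw [← pow_add, Nat.sub_add_cancel h]
  have h2 : (-1 : ℚ) ^ i * (-1) ^ i = 1 := by
    rw [← pow_add, ← two_mul, pow_mul]; norm_num
  calc (-1 : ℚ) ^ (M - i) = (-1) ^ (M - i) * ((-1) ^ i * (-1) ^ i) := by rw [h2, mul_one]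
    _ = ((-1) ^ (M - i) * (-1) ^ i) * (-1) ^ i := by ring
    _ = (-1) ^ M * (-1) ^ i := by rw [h1]

private lemma alt_choose_q (M : ℕ) :
    ∑ i ∈ Finset.range (M + 1), (-1 : ℚ) ^ i * (M.choose i : ℚ) = if M = 0 then 1 else 0 := by
  have := @Int.alternating_sum_range_choose M
  have h2 : ((∑ i ∈ Finset.range (M + 1), ((-1 : ℤ) ^ i * (M.choose i : ℤ)) : ℤ) : ℚ)
      = ∑ i ∈ Finset.range (M + 1), (-1 : ℚ) ^ i * (M.choose i : ℚ) := by push_cast; rfl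
  rw [← h2, this]
  split <;> norm_num

/-- Binomial expansion: `Bⱼ(x) = ∑ C(j,k) Bₖ(x-1)`. -/
private lemma q2 (j : ℕ) (x : ℚ) :
    (Polynomial.bernoulli j).eval x
      = ∑ k ∈ Finset.range (j + 1), (j.choose k : ℚ) * (Polynomial.bernoulli k).eval (x - 1) := by
  cases j with
  | zero => simp
  | succ d =>
    rw [Finset.sum_range_succ]
    have h := congrArg (Polynomial.eval (x - 1)) (Polynomial.sum_bernoulli d)
    simp only [Polynomial.eval_finset_sum, Polynomial.eval_smul, Polynomial.eval_monomial,
      nsmul_eq_mul, smul_eq_mul] at h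
    have h2 := Polynomial.bernoulli_eval_one_add (d + 1) (x - 1)
    have hx : (1 : ℚ) + (x - 1) = x := by ring
    rw [hx] at h2
    rw [h2, h, Nat.choose_self]
    push_cast
    ring

/-- Inverse binomial transform: `∑ (-1)^(n-j) C(n,j) Bⱼ(x) = Bₙ(x-1)`. -/
private lemma q3 (n : ℕ) (x : ℚ) :
    ∑ j ∈ Finset.range (n + 1), (-1 : ℚ) ^ (n - j) * (n.choose j : ℚ) * (Polynomial.bernoulli j).eval x
      = (Polynomial.bernoulli n).eval (x - 1) := by
  have inner : ∀ k ∈ Finset.range (n + 1),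
      ∑ j ∈ Finset.Ico k (n + 1), (-1 : ℚ) ^ (n - j) * (n.choose j : ℚ) * (j.choose k : ℚ)
        = if k = n then 1 else 0 := by
    intro k hk
    rw [Finset.mem_range] at hk
    have hkn : k ≤ n := Nat.lt_succ_iff.mp hk
    rw [Finset.sum_Ico_eq_sum_range]
    have hM : n + 1 - k = (n - k) + 1 := by omega
    rw [hM]
    have step : ∀ i ∈ Finset.range (n - k + 1),
        (-1 : ℚ) ^ (n - (k + i)) * (n.choose (k + i) : ℚ) * ((k + i).choose k : ℚ)
          = (n.choose k : ℚ) * ((-1) ^ (n - k) * ((-1) ^ i * ((n - k).choose i : ℚ))) := by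
      intro i hi
      rw [Finset.mem_range] at hi
      have hik : k + i ≤ n := by omega
      have hc : n.choose (k + i) * (k + i).choose k = n.choose k * (n - k).choose i := by
        have := Nat.choose_mul (n := n) (k := k + i) (s := k) (Nat.le_add_right k i)
        simpa using this
      have hsign : (-1 : ℚ) ^ (n - (k + i)) = (-1) ^ (n - k) * (-1) ^ i := by
        have : n - (k + i) = (n - k) - i := by omega
        rw [this, neg_one_pow_sub_q (n - k) i (by omega)]
      rw [hsign]
      have hcq : (n.choose (k + i) : ℚ) * ((k + i).choose k : ℚ)
          = (n.choose k : ℚ) * ((n - k).choose i : ℚ) := by exact_mod_cast congrArg Nat.cast hc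
      calc (-1 : ℚ) ^ (n - k) * (-1) ^ i * (n.choose (k + i) : ℚ) * ((k + i).choose k : ℚ)
          = (-1 : ℚ) ^ (n - k) * (-1) ^ i * ((n.choose (k + i) : ℚ) * ((k + i).choose k : ℚ)) := by
            ring
        _ = (-1 : ℚ) ^ (n - k) * (-1) ^ i * ((n.choose k : ℚ) * ((n - k).choose i : ℚ)) := by
            rw [hcq]
        _ = (n.choose k : ℚ) * ((-1) ^ (n - k) * ((-1) ^ i * ((n - k).choose i : ℚ))) := by ring
    rw [Finset.sum_congr rfl step, ← Finset.mul_sum]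
    simp_rw [← Finset.mul_sum]
    rw [alt_choose_q (n - k)]
    rcases eq_or_ne k n with h | h
    · subst h; simp
    · have : n - k ≠ 0 := by omega
      simp [h, this]
  calc ∑ j ∈ Finset.range (n + 1), (-1 : ℚ) ^ (n - j) * (n.choose j : ℚ) * (Polynomial.bernoulli j).eval x
      = ∑ j ∈ Finset.range (n + 1), ∑ k ∈ Finset.range (j + 1),
          (-1 : ℚ) ^ (n - j) * (n.choose j : ℚ) * ((j.choose k : ℚ)
            * (Polynomial.bernoulli k).eval (x - 1)) := by
        refine Finset.sum_congr rfl fun j _ => ?_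
        rw [q2 j x, Finset.mul_sum]
    _ = ∑ k ∈ Finset.range (n + 1), (∑ j ∈ Finset.Ico k (n + 1),
          (-1 : ℚ) ^ (n - j) * (n.choose j : ℚ) * (j.choose k : ℚ))
            * (Polynomial.bernoulli k).eval (x - 1) := by
        simp_rw [Finset.range_eq_Ico, Finset.sum_mul]
        rw [← Finset.sum_Ico_Ico_comm]
        refine Finset.sum_congr rfl fun j _ => ?_
        refine Finset.sum_congr rfl fun k _ => ?_
        ring
    _ = ∑ k ∈ Finset.range (n + 1), (if k = n then (1:ℚ) else 0)
          * (Polynomial.bernoulli k).eval (x - 1) := by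
        refine Finset.sum_congr rfl fun k hk => ?_
        rw [inner k hk]
    _ = (Polynomial.bernoulli n).eval (x - 1) := by
        simp [ite_mul]

/-- The key combinatorial identity at rational level. -/
private lemma q4 (m : ℕ) (x : ℚ) :
    ∑ n ∈ Finset.range (m + 1), (-1 : ℚ) ^ (m - n) * (m.choose n : ℚ)
        * (Polynomial.bernoulli (n + 1)).eval x
      = (Polynomial.bernoulli (m + 1)).eval (x - 1)
        + (Polynomial.bernoulli m).eval (x - 1) := by
  have h1 := q3 (m + 1) x
  have h0 := q3 m x
  rw [Finset.sum_range_succ' _ (m + 1)] at h1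
  rw [Finset.sum_range_succ' _ m] at h0
  simp only [Nat.choose_zero_right, Polynomial.bernoulli_zero, Polynomial.eval_one,
    Nat.cast_one, mul_one, Nat.sub_zero, Nat.succ_sub_succ] at h1 h0
  -- h1 : ∑ n ∈ Finset.range (m+1), (-1)^(m-n) * C(m+1,n+1) * E(n+1) + (-1)^(m+1) = F(m+1)
  -- h0 : ∑ n ∈ range m, (-1)^(m-(n+1)) * C(m,n+1) * E(n+1) + (-1)^m = F m
  have split : ∀ n ∈ Finset.range (m + 1),
      (-1 : ℚ) ^ (m - n) * (m.choose n : ℚ) * (Polynomial.bernoulli (n + 1)).eval x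
        = ((-1 : ℚ) ^ (m - n) * ((m + 1).choose (n + 1) : ℚ)
            * (Polynomial.bernoulli (n + 1)).eval x)
          - ((-1 : ℚ) ^ (m - n) * (m.choose (n + 1) : ℚ)
            * (Polynomial.bernoulli (n + 1)).eval x) := by
    intro n _
    have hc : ((m + 1).choose (n + 1) : ℚ) = (m.choose n : ℚ) + (m.choose (n + 1) : ℚ) := by
      exact_mod_cast congrArg Nat.cast (Nat.choose_succ_succ m n)
    rw [hc]; ring
  rw [Finset.sum_congr rfl split, Finset.sum_sub_distrib]
  have hS2 : ∑ n ∈ Finset.range (m + 1), (-1 : ℚ) ^ (m - n) * (m.choose (n + 1) : ℚ)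
      * (Polynomial.bernoulli (n + 1)).eval x
      = -((Polynomial.bernoulli m).eval (x - 1)) + (-1 : ℚ) ^ m := by
    rw [Finset.sum_range_succ]
    rw [Nat.choose_succ_self]
    have hlast : (-1 : ℚ) ^ (m - m) * ((0 : ℕ) : ℚ) * (Polynomial.bernoulli (m + 1)).eval x
        = 0 := by simp
    rw [hlast, add_zero]
    have flip : ∀ n ∈ Finset.range m,
        (-1 : ℚ) ^ (m - n) * (m.choose (n + 1) : ℚ) * (Polynomial.bernoulli (n + 1)).eval x
          = -((-1 : ℚ) ^ (m - (n + 1)) * (m.choose (n + 1) : ℚ)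
              * (Polynomial.bernoulli (n + 1)).eval x) := by
      intro n hn
      rw [Finset.mem_range] at hn
      have : m - n = (m - (n + 1)) + 1 := by omega
      rw [this, pow_succ]
      ring
    rw [Finset.sum_congr rfl flip, Finset.sum_neg_distrib]
    have := h0
    linarith [h0]
  rw [hS2]
  have hS1 : ∑ n ∈ Finset.range (m + 1), (-1 : ℚ) ^ (m - n) * ((m + 1).choose (n + 1) : ℚ)
      * (Polynomial.bernoulli (n + 1)).eval x
      = (Polynomial.bernoulli (m + 1)).eval (x - 1) - (-1 : ℚ) ^ (m + 1) := by
    linarith [h1]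
  rw [hS1, pow_succ]
  ring

section PS

variable {R : Type*} [CommRing R]

private lemma invOfUnit_eq_of_mul_eq_one (f g : R⟦X⟧)
    (hf : constantCoeff f = 1) (hfg : f * g = 1) : invOfUnit f 1 = g := by
  have h := PowerSeries.mul_invOfUnit f 1 (by simpa using hf)
  calc invOfUnit f 1 = (g * f) * invOfUnit f 1 := by rw [mul_comm g f, hfg, one_mul]
    _ = g * (f * invOfUnit f 1) := by rw [mul_assoc]
    _ = g := by rw [h, mul_one]

private lemma geom_inv (r : R) :
    invOfUnit (1 - PowerSeries.C r * X) 1 = PowerSeries.mk fun k => r ^ k := by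
  apply invOfUnit_eq_of_mul_eq_one
  · simp
  · ext n
    rw [sub_mul, one_mul, map_sub]
    cases n with
    | zero => simp
    | succ n =>
      rw [mul_assoc, PowerSeries.coeff_C_mul, PowerSeries.coeff_succ_X_mul]
      simp [pow_succ, mul_comm]

end PS

private lemma inv_one_add_eq :
    invOfUnit (1 + X : PowerSeries (Polynomial ℚ)) 1
      = PowerSeries.mk fun k => (-1 : Polynomial ℚ) ^ k := by
  have h : (1 + X : PowerSeries (Polynomial ℚ))
      = 1 - PowerSeries.C (-1) * X := by
    rw [map_neg, map_one]; ring
  rw [h, geom_inv]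

private lemma V_pow (d : ℕ) :
    ((PowerSeries.mk fun k => (-1 : Polynomial ℚ) ^ k) ^ (d + 1))
      = PowerSeries.mk fun k => (-1 : Polynomial ℚ) ^ k * ((d + k).choose d : Polynomial ℚ) := by
  have h1 : (PowerSeries.mk fun k => (-1 : Polynomial ℚ) ^ k)
      = PowerSeries.rescale (-1) (PowerSeries.mk 1) := by
    ext n
    simp [PowerSeries.coeff_rescale]
  rw [h1, ← map_pow, PowerSeries.mk_one_pow_eq_mk_choose_add]
  ext n
  simp [PowerSeries.coeff_rescale]

private lemma inv_shift_eq :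
    invOfUnit (1 + X - PowerSeries.C Polynomial.X * X) 1
      = PowerSeries.mk fun k => (Polynomial.X - 1 : Polynomial ℚ) ^ k := by
  have h : (1 + X - PowerSeries.C Polynomial.X * X : PowerSeries (Polynomial ℚ))
      = 1 - PowerSeries.C (Polynomial.X - 1) * X := by
    rw [map_sub, map_one]; ring
  rw [h, geom_inv]

private lemma coeff_sq_geom (m : ℕ) :
    PowerSeries.coeff m
        ((PowerSeries.mk fun k => (Polynomial.X - 1 : Polynomial ℚ) ^ k) ^ 2)
      = (m + 1 : ℕ) • (Polynomial.X - 1 : Polynomial ℚ) ^ m := by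
  rw [sq, PowerSeries.coeff_mul]
  have : ∀ p ∈ Finset.HasAntidiagonal.antidiagonal m,
      PowerSeries.coeff p.1 (PowerSeries.mk fun k => (Polynomial.X - 1 : Polynomial ℚ) ^ k)
        * PowerSeries.coeff p.2 (PowerSeries.mk fun k => (Polynomial.X - 1 : Polynomial ℚ) ^ k)
      = (Polynomial.X - 1 : Polynomial ℚ) ^ m := by
    intro p hp
    rw [Finset.HasAntidiagonal.mem_antidiagonal] at hp
    rw [PowerSeries.coeff_mk, PowerSeries.coeff_mk, ← pow_add, hp]
  rw [Finset.sum_congr rfl this, Finset.sum_const, Finset.Nat.card_antidiagonal]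

open PowerSeries in
/-- The ordinary generating function `B(x,t) = Σ Bₙ(x) tⁿ ∈ (ℚ[x])[[t]]`
of the Bernoulli polynomials satisfies
`B(x, t/(1+t)) = (1+t)·B(x,t) − t(1+t)·(1+t−tx)⁻²`, where `t/(1+t)` and `(1+t−tx)⁻¹` are
computed via `invOfUnit` (both `1+t` and `1+t−tx` are units with constant term `1`). -/
theorem bernoulli_ogf_tau_equation :
    substPS (X * invOfUnit (1 + X : PowerSeries (Polynomial ℚ)) 1)
        (mk fun n => Polynomial.bernoulli n)
      = (1 + X) * (mk fun n => Polynomial.bernoulli n)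
        - X * (1 + X) *
          (invOfUnit (1 + X - C Polynomial.X * X) 1) ^ 2 := by
  have hXsq : ∀ j : ℕ, coeff j
      (X * (mk fun k => (Polynomial.X - 1 : Polynomial ℚ) ^ k) ^ 2)
      = j • (Polynomial.X - 1 : Polynomial ℚ) ^ (j - 1) := by
    intro j
    cases j with
    | zero => simp
    | succ l => rw [coeff_succ_X_mul, coeff_sq_geom]; simp
  rw [inv_shift_eq]
  have hsplit : (X * (1 + X) * (mk fun k => (Polynomial.X - 1 : Polynomial ℚ) ^ k) ^ 2
      : PowerSeries (Polynomial ℚ))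
      = X * (mk fun k => (Polynomial.X - 1 : Polynomial ℚ) ^ k) ^ 2
        + X * (X * (mk fun k => (Polynomial.X - 1 : Polynomial ℚ) ^ k) ^ 2) := by ring
  rw [hsplit]
  refine PowerSeries.ext fun k => ?_
  rw [PowerSeries.substPS, coeff_mk]
  cases k with
  | zero =>
    simp [Polynomial.bernoulli_zero]
  | succ m =>
    rw [Finset.sum_range_succ']
    have hf0 : coeff 0 (mk fun n => Polynomial.bernoulli n)
        * coeff (m + 1) ((X * invOfUnit (1 + X) 1) ^ 0) = 0 := by
      simp
    rw [hf0, add_zero]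
    have hu : ∀ n ∈ Finset.range (m + 1),
        coeff (m + 1) ((X * invOfUnit (1 + X : PowerSeries (Polynomial ℚ)) 1)
          ^ (n + 1))
          = (-1 : Polynomial ℚ) ^ (m - n) * ((m.choose n : ℕ) : Polynomial ℚ) := by
      intro n hn
      rw [Finset.mem_range] at hn
      rw [inv_one_add_eq, mul_pow, V_pow n]
      have h1 : m + 1 = (m - n) + (n + 1) := by omega
      rw [h1, coeff_X_pow_mul, coeff_mk]
      have h2 : n + (m - n) = m := by omega
      rw [h2]
    have hsum : ∑ n ∈ Finset.range (m + 1),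
        coeff (n + 1) (mk fun j => Polynomial.bernoulli j)
          * coeff (m + 1)
            ((X * invOfUnit (1 + X : PowerSeries (Polynomial ℚ)) 1) ^ (n + 1))
        = ∑ n ∈ Finset.range (m + 1),
            Polynomial.bernoulli (n + 1)
              * ((-1 : Polynomial ℚ) ^ (m - n) * ((m.choose n : ℕ) : Polynomial ℚ)) := by
      refine Finset.sum_congr rfl fun n hn => ?_
      rw [coeff_mk, hu n hn]
    rw [hsum]
    -- RHS coefficients
    rw [map_sub, map_add, add_mul, one_mul, map_add, coeff_mk, coeff_succ_X_mul, coeff_mk]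
    rw [coeff_succ_X_mul, coeff_sq_geom, coeff_succ_X_mul, hXsq]
    apply Polynomial.funext
    intro x
    simp only [Polynomial.eval_finset_sum, Polynomial.eval_mul, Polynomial.eval_pow,
      Polynomial.eval_neg, Polynomial.eval_one, Polynomial.eval_natCast, Polynomial.eval_add,
      Polynomial.eval_sub, Polynomial.eval_smul, nsmul_eq_mul, Polynomial.eval_X,
      Nat.cast_add, Nat.cast_one]
    have hq4 := q4 m x
    have e1 := Polynomial.bernoulli_eval_one_add (m + 1) (x - 1)
    have e0 := Polynomial.bernoulli_eval_one_add m (x - 1)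
    have hx : (1 : ℚ) + (x - 1) = x := by ring
    rw [hx] at e1 e0
    have hsum2 : ∑ n ∈ Finset.range (m + 1),
        (Polynomial.bernoulli (n + 1)).eval x * ((-1 : ℚ) ^ (m - n) * (m.choose n : ℚ))
        = ∑ n ∈ Finset.range (m + 1), (-1 : ℚ) ^ (m - n) * (m.choose n : ℚ)
            * (Polynomial.bernoulli (n + 1)).eval x := by
      refine Finset.sum_congr rfl fun n _ => by ring
    rw [hsum2, hq4]
    have hm1 : (m + 1) - 1 = m := by omega
    rw [hm1] at e1
    push_cast at e1 e0 ⊢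
    linarith

end
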